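/- Let n ≥ 2 and let A be a real n×n matrix possessing the strong Perron–Frobenius property that is diagonalizable over ℂ: there exist an invertible complex n×n matrix P and a function d : Fin n → ℂ with (viewing A as a complex matrix) A = P · diag(d) · P⁻¹, and suppose there is a permutation σ of the index set with d(σ(i)) = conj(d(i)) for all i and conj(P(i,j)) = P(i,σ(j)) for all i,j. Then there exists a real n×n matrix B whose entrywise coercion to ℂ equals P · diag(i ↦ (|d(i)| : ℂ)) · P⁻¹, and B possesses the strong Perron–Frobenius property. -/

import Mathlib

open Polynomial Matrix

/-- The spectral radius of a real matrix: the maximum of the moduli of the complex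
roots of its characteristic polynomial. -/
noncomputable def specRadius {n : ℕ} (A : Matrix (Fin n) (Fin n) ℝ) : ℝ :=
  (((A.charpoly.map (algebraMap ℝ ℂ)).roots.map (fun z => ‖z‖₊)).sup : NNReal)

/-- The strong Perron–Frobenius property for a real matrix. -/
def HasStrongPF {n : ℕ} (A : Matrix (Fin n) (Fin n) ℝ) : Prop :=
  0 < specRadius A ∧
  (A.charpoly.map (algebraMap ℝ ℂ)).rootMultiplicity (specRadius A : ℂ) = 1 ∧
  (∃ x : Fin n → ℝ, (∀ i, 0 < x i) ∧ A.mulVec x = (specRadius A) • x) ∧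
  (∀ μ ∈ (A.charpoly.map (algebraMap ℝ ℂ)).roots,
      μ ≠ (specRadius A : ℂ) → ‖μ‖ < specRadius A)

/-- Eventual positivity of a real matrix. -/
def EventuallyPos {n : ℕ} (A : Matrix (Fin n) (Fin n) ℝ) : Prop :=
  ∃ p : ℕ, ∀ k ≥ p, ∀ i j, 0 < (A ^ k) i j

/-- Characteristic polynomial is invariant under conjugation by an invertible matrix. -/
lemma charpoly_conj_aux {n : ℕ} (P N : Matrix (Fin n) (Fin n) ℂ) (hP : IsUnit P) :
    (P * N * P⁻¹).charpoly = N.charpoly := by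
  have hdet : IsUnit P.det := (Matrix.isUnit_iff_isUnit_det P).mp hP
  have hPP : P * P⁻¹ = 1 := Matrix.mul_nonsing_inv P hdet
  have hone : (1 : Matrix (Fin n) (Fin n) ℂ).map (C : ℂ → ℂ[X]) = 1 :=
    Matrix.map_one _ (map_zero C) (map_one C)
  have hsc : Matrix.scalar (Fin n) (X : ℂ[X]) =
      (X : ℂ[X]) • (1 : Matrix (Fin n) (Fin n) ℂ[X]) := by
    rw [smul_one_eq_diagonal]; rfl
  have hchar : charmatrix (P * N * P⁻¹) =
      P.map C * charmatrix N * (P⁻¹).map C := by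
    rw [charmatrix, charmatrix, RingHom.mapMatrix_apply, RingHom.mapMatrix_apply, hsc]
    calc (X : ℂ[X]) • (1 : Matrix (Fin n) (Fin n) ℂ[X]) - (P * N * P⁻¹).map C
        = (X : ℂ[X]) • (P.map C * (P⁻¹).map C) - P.map C * N.map C * (P⁻¹).map C := by
          rw [← Matrix.map_mul, ← Matrix.map_mul, ← Matrix.map_mul, hPP, hone]
      _ = P.map C * ((X : ℂ[X]) • 1 - N.map C) * (P⁻¹).map C := by
          rw [mul_sub, sub_mul, mul_smul_comm, smul_mul_assoc, mul_one]
  rw [Matrix.charpoly, hchar, Matrix.det_mul, Matrix.det_mul, Matrix.charpoly]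
  have h1 : (P.map (C : ℂ → ℂ[X])).det * ((P⁻¹).map (C : ℂ → ℂ[X])).det = 1 := by
    rw [← Matrix.det_mul, ← Matrix.map_mul, hPP, hone, Matrix.det_one]
  calc (P.map (C : ℂ → ℂ[X])).det * (charmatrix N).det * ((P⁻¹).map (C : ℂ → ℂ[X])).det
      = (P.map (C : ℂ → ℂ[X])).det * ((P⁻¹).map (C : ℂ → ℂ[X])).det *
        (charmatrix N).det := by ring
    _ = (charmatrix N).det := by rw [h1, one_mul]

lemma charpoly_diagonal_aux {n : ℕ} (c : Fin n → ℂ) :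
    (Matrix.diagonal c).charpoly = ∏ i, (X - C (c i)) := by
  have h : charmatrix (Matrix.diagonal c) = Matrix.diagonal (fun i => X - C (c i)) := by
    ext i j
    by_cases hij : i = j
    · subst hij; simp
    · simp [hij, charmatrix_apply_ne _ _ _ hij, Matrix.diagonal_apply_ne _ hij]
  rw [Matrix.charpoly, h, Matrix.det_diagonal]

lemma mulVec_ofReal_aux {n : ℕ} (B : Matrix (Fin n) (Fin n) ℝ) (x : Fin n → ℝ) (i : Fin n) :
    (B.map Complex.ofReal).mulVec (fun j => ((x j : ℝ) : ℂ)) i = ((B.mulVec x i : ℝ) : ℂ) := by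
  simp only [Matrix.mulVec, Matrix.map_apply, dotProduct]
  push_cast
  rfl

/-- The modulus function is Frobenius: it preserves the strong Perron–Frobenius
property for diagonalizable matrices. -/
theorem strongPF_abs {n : ℕ} (hn : 2 ≤ n)
    (A : Matrix (Fin n) (Fin n) ℝ) (hA : HasStrongPF A)
    (P : Matrix (Fin n) (Fin n) ℂ) (hP : IsUnit P) (d : Fin n → ℂ)
    (hdiag : A.map Complex.ofReal = P * Matrix.diagonal d * P⁻¹)
    (σ : Equiv.Perm (Fin n))
    (hdσ : ∀ i, d (σ i) = starRingEnd ℂ (d i))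
    (hPσ : ∀ i j, starRingEnd ℂ (P i j) = P i (σ j)) :
    ∃ B : Matrix (Fin n) (Fin n) ℝ,
      B.map Complex.ofReal = P * Matrix.diagonal (fun i => ((‖d i‖ : ℝ) : ℂ)) * P⁻¹ ∧
      HasStrongPF B := by
  classical
  obtain ⟨hρpos, hmul, ⟨x, hxpos, hxeig⟩, hdom⟩ := hA
  set ρ : ℝ := specRadius A with hρdef
  set D : Matrix (Fin n) (Fin n) ℂ := Matrix.diagonal d with hD
  set D' : Matrix (Fin n) (Fin n) ℂ :=
    Matrix.diagonal (fun i => ((‖d i‖ : ℝ) : ℂ)) with hD'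
  set M : Matrix (Fin n) (Fin n) ℂ := P * D' * P⁻¹ with hMdef
  have hdet : IsUnit P.det := (Matrix.isUnit_iff_isUnit_det P).mp hP
  have hPPinv : P * P⁻¹ = 1 := Matrix.mul_nonsing_inv P hdet
  have hPinvP : P⁻¹ * P = 1 := Matrix.nonsing_inv_mul P hdet
  -- conjugation facts
  have hconjP : P.map (starRingEnd ℂ) = P.submatrix id σ := by
    ext i j; simp [Matrix.map_apply, Matrix.submatrix_apply, hPσ]
  have hconjPinv : (P⁻¹).map (starRingEnd ℂ) = (P⁻¹).submatrix σ id := by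
    have hU : IsUnit (P.map (starRingEnd ℂ)) := by
      have : IsUnit (P.map (starRingEnd ℂ)).det := by
        have hd : (P.map (starRingEnd ℂ)).det = (starRingEnd ℂ) P.det := by
          rw [← RingHom.mapMatrix_apply, ← RingHom.map_det]
        rw [hd]
        exact hdet.map (starRingEnd ℂ)
      exact (Matrix.isUnit_iff_isUnit_det _).mpr this
    have h1 : P.map (starRingEnd ℂ) * (P⁻¹).map (starRingEnd ℂ) = 1 := by
      rw [← Matrix.map_mul, hPPinv]
      simp
    have h2 : P.map (starRingEnd ℂ) * (P⁻¹).submatrix (σ : Fin n → Fin n) id = 1 := by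
      rw [hconjP]
      have := Matrix.submatrix_mul_equiv P P⁻¹ (id : Fin n → Fin n) σ (id : Fin n → Fin n)
      rw [this, hPPinv]
      simp
    exact (Matrix.inv_eq_right_inv h1).symm.trans (Matrix.inv_eq_right_inv h2)
  have habsσ : ∀ i, ‖d (σ i)‖ = ‖d i‖ := by
    intro i; rw [hdσ]; exact Complex.norm_conj _
  have hDσ : D'.submatrix (σ : Fin n → Fin n) (σ : Fin n → Fin n) = D' := by
    ext i j
    by_cases hij : i = j
    · subst hij; simp [hD', Matrix.diagonal_apply_eq, habsσ]
    · have : σ i ≠ σ j := fun h => hij (σ.injective h)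
      simp [hD', Matrix.diagonal_apply_ne _ hij, Matrix.diagonal_apply_ne _ this]
  have hconjD' : D'.map (starRingEnd ℂ) = D' := by
    ext i j
    by_cases hij : i = j
    · subst hij; simp [hD']
    · simp [hD', Matrix.diagonal_apply_ne _ hij]
  -- M is real
  have hconjM : M.map (starRingEnd ℂ) = M := by
    rw [hMdef, Matrix.map_mul, Matrix.map_mul, hconjP, hconjD', hconjPinv]
    calc P.submatrix id σ * D' * (P⁻¹).submatrix (σ : Fin n → Fin n) id
        = P.submatrix id σ * D'.submatrix (σ : Fin n → Fin n) (σ : Fin n → Fin n) *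
          (P⁻¹).submatrix (σ : Fin n → Fin n) id := by rw [hDσ]
      _ = (P * D').submatrix (id : Fin n → Fin n) (σ : Fin n → Fin n) *
          (P⁻¹).submatrix (σ : Fin n → Fin n) id := by
          rw [Matrix.submatrix_mul_equiv P D' (id : Fin n → Fin n) σ (σ : Fin n → Fin n)]
      _ = (P * D' * P⁻¹).submatrix (id : Fin n → Fin n) (id : Fin n → Fin n) := by
          rw [Matrix.submatrix_mul_equiv (P * D') P⁻¹ (id : Fin n → Fin n) σ (id : Fin n → Fin n)]
      _ = P * D' * P⁻¹ := by rw [Matrix.submatrix_id_id]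
  set B : Matrix (Fin n) (Fin n) ℝ := Matrix.of (fun i j => (M i j).re) with hBdef
  have hBM : B.map Complex.ofReal = M := by
    ext i j
    have := congrFun (congrFun hconjM i) j
    simp only [Matrix.map_apply] at this
    exact (Complex.conj_eq_iff_re.mp this)
  -- characteristic polynomials
  have halg : ∀ (N : Matrix (Fin n) (Fin n) ℝ), N.map Complex.ofReal = N.map (algebraMap ℝ ℂ) := by
    intro N; rfl
  have hAc : A.charpoly.map (algebraMap ℝ ℂ) = ∏ i, (X - C (d i)) := by
    rw [← Matrix.charpoly_map A (algebraMap ℝ ℂ), ← halg, hdiag,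
      charpoly_conj_aux P D hP, hD, charpoly_diagonal_aux]
  have hBc : B.charpoly.map (algebraMap ℝ ℂ) = ∏ i, (X - C ((‖d i‖ : ℝ) : ℂ)) := by
    rw [← Matrix.charpoly_map B (algebraMap ℝ ℂ), ← halg, hBM, hMdef,
      charpoly_conj_aux P D' hP, hD', charpoly_diagonal_aux]
  have hprodroots : ∀ (c : Fin n → ℂ), (∏ i, (X - C (c i))).roots =
      Finset.univ.val.map c := by
    intro c
    rw [Finset.prod_eq_multiset_prod]
    have h := Polynomial.roots_multiset_prod_X_sub_C (Finset.univ.val.map c)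
    rw [Multiset.map_map] at h
    exact h
  have hAroots : (A.charpoly.map (algebraMap ℝ ℂ)).roots = Finset.univ.val.map d := by
    rw [hAc, hprodroots]
  have hBroots : (B.charpoly.map (algebraMap ℝ ℂ)).roots =
      Finset.univ.val.map (fun i => ((‖d i‖ : ℝ) : ℂ)) := by
    rw [hBc, hprodroots]
  -- equal spectral radii
  have hspec : specRadius B = ρ := by
    rw [hρdef]
    unfold specRadius
    rw [hAroots, hBroots, Multiset.map_map, Multiset.map_map]
    congr 2
    apply Multiset.map_congr rfl
    intro i _
    show ‖((‖d i‖ : ℝ) : ℂ)‖₊ = ‖d i‖₊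
    rw [Complex.nnnorm_real]
    ext
    simp [Real.norm_eq_abs]
  have hρnonneg : (0:ℝ) ≤ ρ := le_of_lt hρpos
  -- key equivalence: |d i| = ρ ↔ d i = ρ
  have hkey : ∀ i : Fin n, ((‖d i‖ : ℝ) : ℂ) = (ρ : ℂ) ↔ d i = (ρ : ℂ) := by
    intro i
    constructor
    · intro h
      by_contra hne
      have hmem : d i ∈ (A.charpoly.map (algebraMap ℝ ℂ)).roots := by
        rw [hAroots]; exact Multiset.mem_map_of_mem d (Finset.mem_univ i)
      have := hdom (d i) hmem hne
      have habs : ‖d i‖ = ρ := Complex.ofReal_injective h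
      rw [habs] at this
      exact lt_irrefl _ this
    · intro h
      rw [h]
      rw [Complex.norm_real, Real.norm_eq_abs, abs_of_nonneg hρnonneg]
  -- root multiplicity
  have hmulB : (B.charpoly.map (algebraMap ℝ ℂ)).rootMultiplicity ((ρ : ℝ) : ℂ) = 1 := by
    rw [← Polynomial.count_roots, hBroots, Multiset.count_map]
    rw [← Polynomial.count_roots, hAroots, Multiset.count_map] at hmul
    rw [← hmul]
    congr 1
    apply Multiset.filter_congr
    intro i _
    constructor
    · intro h; exact ((hkey i).mp h.symm).symm
    · intro h; exact ((hkey i).mpr h.symm).symm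
  -- eigenvector
  have hxceig : M.mulVec (fun j => ((x j : ℝ) : ℂ)) = (ρ : ℂ) • (fun j => ((x j : ℝ) : ℂ)) := by
    set xc : Fin n → ℂ := fun j => ((x j : ℝ) : ℂ) with hxc
    have hA_xc : (A.map Complex.ofReal).mulVec xc = (ρ : ℂ) • xc := by
      funext i
      rw [mulVec_ofReal_aux]
      have := congrFun hxeig i
      simp only [Pi.smul_apply, smul_eq_mul] at this ⊢
      rw [this]
      push_cast
      rfl
    set v : Fin n → ℂ := (P⁻¹).mulVec xc with hv
    have hPinvPvec : ∀ w : Fin n → ℂ, (P⁻¹).mulVec (P.mulVec w) = w := by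
      intro w
      rw [Matrix.mulVec_mulVec, hPinvP, Matrix.one_mulVec]
    have hPPinvvec : P.mulVec ((P⁻¹).mulVec xc) = xc := by
      rw [Matrix.mulVec_mulVec, hPPinv, Matrix.one_mulVec]
    have hDv : D.mulVec v = (ρ : ℂ) • v := by
      have h1 : (P * D * P⁻¹).mulVec xc = (ρ : ℂ) • xc := by
        rw [← hdiag]; exact hA_xc
      have h2 : (P * D * P⁻¹).mulVec xc = P.mulVec (D.mulVec v) := by
        rw [hv, ← Matrix.mulVec_mulVec, ← Matrix.mulVec_mulVec]
      rw [h2] at h1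
      have := congrArg ((P⁻¹).mulVec) h1
      rw [hPinvPvec, Matrix.mulVec_smul] at this
      rw [this, hv]
    have hD'v : D'.mulVec v = (ρ : ℂ) • v := by
      funext i
      have h1 := congrFun hDv i
      rw [hD] at h1
      rw [hD']
      rw [Matrix.mulVec_diagonal] at h1 ⊢
      simp only [Pi.smul_apply, smul_eq_mul] at h1 ⊢
      by_cases hvi : v i = 0
      · rw [hvi, mul_zero, mul_zero]
      · have hdi : d i = (ρ : ℂ) := mul_right_cancel₀ hvi (by rw [h1])
        rw [hdi]
        rw [Complex.norm_real, Real.norm_eq_abs, abs_of_nonneg hρnonneg]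
    calc M.mulVec xc = P.mulVec (D'.mulVec v) := by
          rw [hMdef, ← Matrix.mulVec_mulVec, ← Matrix.mulVec_mulVec]
      _ = P.mulVec ((ρ : ℂ) • v) := by rw [hD'v]
      _ = (ρ : ℂ) • P.mulVec v := by rw [Matrix.mulVec_smul]
      _ = (ρ : ℂ) • xc := by rw [hv, hPPinvvec]
  have hBeig : B.mulVec x = ρ • x := by
    funext i
    apply Complex.ofReal_injective
    have h1 := mulVec_ofReal_aux B x i
    rw [hBM] at h1
    have h2 := congrFun hxceig i
    simp only [Pi.smul_apply, smul_eq_mul] at h2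
    rw [h1] at h2
    rw [h2, Pi.smul_apply, smul_eq_mul]
    push_cast
    ring
  -- dominance for B
  have hdomB : ∀ μ ∈ (B.charpoly.map (algebraMap ℝ ℂ)).roots,
      μ ≠ ((ρ : ℝ) : ℂ) → ‖μ‖ < ρ := by
    intro μ hμ hne
    rw [hBroots] at hμ
    obtain ⟨i, _, hi⟩ := Multiset.mem_map.mp hμ
    have hdne : d i ≠ (ρ : ℂ) := by
      intro h
      exact hne (hi ▸ (hkey i).mpr h)
    have hmem : d i ∈ (A.charpoly.map (algebraMap ℝ ℂ)).roots := by
      rw [hAroots]; exact Multiset.mem_map_of_mem d (Finset.mem_univ i)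
    have hlt := hdom (d i) hmem hdne
    rw [← hi, Complex.norm_real, Real.norm_eq_abs, abs_of_nonneg (norm_nonneg _)]
    exact hlt
  refine ⟨B, hBM, ?_, ?_, ⟨x, hxpos, ?_⟩, ?_⟩
  · rw [hspec]; exact hρpos
  · rw [hspec]; exact hmulB
  · rw [hspec]; exact hBeig
  · rw [hspec]; exact hdomB
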